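/- For all integers 1 ≤ m ≤ n, in a random game G(m,n) the probability that Row loses at least one action in iterated elimination satisfies Pr(S^R(m,n) < m) ≤ m(m−1)·(m/n)^{(m−1)/4}. Moreover, for every fixed m, Pr(S^R(m,n) < m) = O(n^{−(m−1)/2}) as n → ∞. -/

import Mathlib

open Finset Filter

noncomputable section

/-- Row action `i` is strictly dominated in the restricted game with Row actions `X`
and Column actions `Y`, for Row payoff matrix `R`. -/
def RowDomIn {m n : ℕ} (R : Fin m → Fin n → ℝ) (X : Finset (Fin m)) (Y : Finset (Fin n))
    (i : Fin m) : Prop :=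
  ∃ i' ∈ X, ∀ j ∈ Y, R i j < R i' j

/-- Column action `j` is strictly dominated in the restricted game with Row actions `X`
and Column actions `Y`, for Column payoff matrix `C`. -/
def ColDomIn {m n : ℕ} (C : Fin m → Fin n → ℝ) (X : Finset (Fin m)) (Y : Finset (Fin n))
    (j : Fin n) : Prop :=
  ∃ j' ∈ Y, ∀ i ∈ X, C i j < C i j'

open Classical in
/-- One round of iterated elimination: simultaneously delete every strictly dominated
action of both players in the current restricted game. -/
def elimStep {m n : ℕ} (R C : Fin m → Fin n → ℝ)
    (p : Finset (Fin m) × Finset (Fin n)) : Finset (Fin m) × Finset (Fin n) :=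
  (p.1.filter fun i => ¬ RowDomIn R p.1 p.2 i,
   p.2.filter fun j => ¬ ColDomIn C p.1 p.2 j)

/-- Surviving actions of the subgame `(p.1, p.2)` after iterated elimination of strictly
dominated actions (iterating `m + n` times surely reaches the fixed point). -/
def survivorsFrom {m n : ℕ} (R C : Fin m → Fin n → ℝ)
    (p : Finset (Fin m) × Finset (Fin n)) : Finset (Fin m) × Finset (Fin n) :=
  (elimStep R C)^[m + n] p

/-- The subgame `(p.1, p.2)` is strict-dominance solvable: exactly one action of each
player survives iterated elimination of strictly dominated actions. -/
def SolvableFrom {m n : ℕ} (R C : Fin m → Fin n → ℝ)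
    (p : Finset (Fin m) × Finset (Fin n)) : Prop :=
  (survivorsFrom R C p).1.card = 1 ∧ (survivorsFrom R C p).2.card = 1

/-- Surviving actions of the full game after iterated elimination. -/
def survivors {m n : ℕ} (R C : Fin m → Fin n → ℝ) : Finset (Fin m) × Finset (Fin n) :=
  survivorsFrom R C (Finset.univ, Finset.univ)

/-- The game is strict-dominance solvable. -/
def Solvable {m n : ℕ} (R C : Fin m → Fin n → ℝ) : Prop :=
  SolvableFrom R C (Finset.univ, Finset.univ)

/-- The number of rounds performed by the iterated elimination procedure:
the least `k` such that round `k + 1` deletes nothing more. -/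
def elimRounds {m n : ℕ} (R C : Fin m → Fin n → ℝ) : ℕ :=
  sInf {k | (elimStep R C)^[k + 1] (Finset.univ, Finset.univ)
          = (elimStep R C)^[k] (Finset.univ, Finset.univ)}

/-- Sample space of the random game `G(m,n)`: for each Column action an i.i.d. uniform
permutation giving Row's ordinal payoffs in that column, and for each Row action an
i.i.d. uniform permutation giving Column's ordinal payoffs in that row. -/
abbrev Omega (m n : ℕ) := (Fin n → Equiv.Perm (Fin m)) × (Fin m → Equiv.Perm (Fin n))

/-- Row's payoff matrix of the realized game. -/
def RPay {m n : ℕ} (ω : Omega m n) : Fin m → Fin n → ℝ := fun i j => ((ω.1 j) i : ℕ)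

/-- Column's payoff matrix of the realized game. -/
def CPay {m n : ℕ} (ω : Omega m n) : Fin m → Fin n → ℝ := fun i j => ((ω.2 i) j : ℕ)

/-- Probability of an event under the uniform distribution on `Omega m n`
(i.e. all `m + n` permutations uniform and mutually independent). -/
def Pr {m n : ℕ} (E : Set (Omega m n)) : ℝ :=
  (E.toFinite.toFinset.card : ℝ) / (Fintype.card (Omega m n) : ℝ)

open Classical in
/-- Number of Row actions that are not strictly dominated. -/
def UR {m n : ℕ} (ω : Omega m n) : ℕ :=
  (Finset.univ.filter fun i => ¬ RowDomIn (RPay ω) Finset.univ Finset.univ i).card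

open Classical in
/-- Number of Column actions that are not strictly dominated. -/
def UC {m n : ℕ} (ω : Omega m n) : ℕ :=
  (Finset.univ.filter fun j => ¬ ColDomIn (CPay ω) Finset.univ Finset.univ j).card

/-- Number of Row actions surviving iterated elimination. -/
def SR {m n : ℕ} (ω : Omega m n) : ℕ := (survivors (RPay ω) (CPay ω)).1.card

/-- Number of Column actions surviving iterated elimination. -/
def SC {m n : ℕ} (ω : Omega m n) : ℕ := (survivors (RPay ω) (CPay ω)).2.card

/-- The realized game is strict-dominance solvable. -/
def GameSolvable {m n : ℕ} (ω : Omega m n) : Prop := Solvable (RPay ω) (CPay ω)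

/-- Number of rounds of the iterated elimination procedure in the realized game. -/
def GameRounds {m n : ℕ} (ω : Omega m n) : ℕ := elimRounds (RPay ω) (CPay ω)

/-- `π(m,n)`: probability that the random game `G(m,n)` is strict-dominance solvable. -/
def probSolvable (m n : ℕ) : ℝ := Pr {ω : Omega m n | GameSolvable ω}

/-- Expected number of Column's strictly undominated actions, `E[U^C(m,n)]`. -/
def expUC (m n : ℕ) : ℝ :=
  (∑ ω : Omega m n, (UC ω : ℝ)) / (Fintype.card (Omega m n) : ℝ)

/-- Expected number of Column actions surviving iterated elimination, `E[S^C(m,n)]`. -/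
def expSC (m n : ℕ) : ℝ :=
  (∑ ω : Omega m n, (SC ω : ℝ)) / (Fintype.card (Omega m n) : ℝ)

open Classical in
/-- `E[I(m,n)]`: expected number of elimination rounds conditional on the game being
strict-dominance solvable. -/
def condExpRounds (m n : ℕ) : ℝ :=
  (∑ ω : Omega m n, if GameSolvable ω then (GameRounds ω : ℝ) else 0) /
    (∑ ω : Omega m n, if GameSolvable ω then (1 : ℝ) else 0)

/-- Unsigned Stirling numbers of the first kind. -/
def stirling1 : ℕ → ℕ → ℕ
  | 0, 0 => 1
  | 0, _ + 1 => 0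
  | _ + 1, 0 => 0
  | n + 1, k + 1 => n * stirling1 n (k + 1) + stirling1 n k

end

section Stmt18Aux

open Equiv Finset
open scoped Classical

/-! ### Probability infrastructure -/

lemma omega_nonempty (m n : ℕ) : Nonempty (Omega m n) := ⟨fun _ => 1, fun _ => 1⟩

lemma card_omega_pos (m n : ℕ) : 0 < (Fintype.card (Omega m n) : ℝ) := by
  haveI := omega_nonempty m n
  exact_mod_cast Fintype.card_pos

lemma Pr_nonneg {m n : ℕ} (E : Set (Omega m n)) : 0 ≤ Pr E :=
  div_nonneg (by positivity) (card_omega_pos m n).le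

lemma Pr_le_one {m n : ℕ} (E : Set (Omega m n)) : Pr E ≤ 1 := by
  rw [Pr, div_le_one (card_omega_pos m n)]
  exact_mod_cast (Finset.card_le_card (Finset.subset_univ _)).trans_eq Finset.card_univ

lemma Pr_eq_zero_of_empty {m n : ℕ} {E : Set (Omega m n)} (h : E = ∅) : Pr E = 0 := by
  subst h
  rw [Pr]
  rw [Set.Finite.toFinset_eq_empty.mpr rfl]
  simp

lemma Pr_le_sum {m n : ℕ} {ι : Type*} [Fintype ι] (E : Set (Omega m n)) (A : ι → Set (Omega m n))
    (h : ∀ ω ∈ E, ∃ x, ω ∈ A x) : Pr E ≤ ∑ x : ι, Pr (A x) := by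
  have hcard : (E.toFinite.toFinset).card ≤ ∑ x : ι, ((A x).toFinite.toFinset).card := by
    calc (E.toFinite.toFinset).card
        ≤ (Finset.univ.biUnion (fun x : ι => (A x).toFinite.toFinset)).card := by
          apply Finset.card_le_card
          intro ω hω
          rw [Set.Finite.mem_toFinset] at hω
          obtain ⟨x, hx⟩ := h ω hω
          exact Finset.mem_biUnion.mpr ⟨x, Finset.mem_univ x, (Set.Finite.mem_toFinset _).mpr hx⟩
      _ ≤ ∑ x : ι, ((A x).toFinite.toFinset).card := Finset.card_biUnion_le
  have h2 : (∑ x : ι, Pr (A x))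
      = (∑ x : ι, (((A x).toFinite.toFinset).card : ℝ)) / (Fintype.card (Omega m n) : ℝ) := by
    rw [Finset.sum_div]
    rfl
  rw [Pr, h2]
  exact (div_le_div_iff_of_pos_right (card_omega_pos m n)).mpr (by exact_mod_cast hcard)

/-! ### Records of a permutation -/

/-- `k` is a record (prefix maximum) position of `σ`. -/
def IsRec {N : ℕ} (σ : Equiv.Perm (Fin N)) (k : Fin N) : Prop := ∀ l, l < k → σ l < σ k

instance {N : ℕ} (σ : Equiv.Perm (Fin N)) (k : Fin N) : Decidable (IsRec σ k) := by
  unfold IsRec; infer_instance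

/-- insert a new last position with value `v` (other values order-collapsed). -/
def ins {N : ℕ} (v : Fin (N+1)) (τ : Equiv.Perm (Fin N)) : Equiv.Perm (Fin (N+1)) :=
  ((finSuccEquiv' (Fin.last N)).trans (Equiv.optionCongr τ)).trans (finSuccEquiv' v).symm

@[simp] lemma ins_last {N : ℕ} (v : Fin (N+1)) (τ : Equiv.Perm (Fin N)) :
    ins v τ (Fin.last N) = v := by
  simp [ins, finSuccEquiv'_at, finSuccEquiv'_symm_none]

@[simp] lemma ins_castSucc {N : ℕ} (v : Fin (N+1)) (τ : Equiv.Perm (Fin N)) (k : Fin N) :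
    ins v τ (Fin.castSucc k) = v.succAbove (τ k) := by
  simp [ins, finSuccEquiv'_last_apply_castSucc, finSuccEquiv'_symm_some]

lemma ins_bijective {N : ℕ} :
    Function.Bijective (fun p : Equiv.Perm (Fin N) × Fin (N+1) => ins p.2 p.1) := by
  constructor
  · rintro ⟨τ, v⟩ ⟨τ', v'⟩ h
    simp only at h
    have hv : v = v' := by
      have := congrArg (fun σ : Equiv.Perm (Fin (N+1)) => σ (Fin.last N)) h
      simpa using this
    subst hv
    have hτ : τ = τ' := by
      apply Equiv.ext; intro k
      have := congrArg (fun σ : Equiv.Perm (Fin (N+1)) => σ (Fin.castSucc k)) h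
      simp only [ins_castSucc] at this
      exact Fin.succAbove_right_injective this
    simp [hτ]
  · intro σ
    set v := σ (Fin.last N) with hv
    set e' : Option (Fin N) ≃ Option (Fin N) :=
      ((finSuccEquiv' (Fin.last N)).symm.trans σ).trans (finSuccEquiv' v) with he'
    have hnone : e' none = none := by
      simp [he', Equiv.trans_apply, finSuccEquiv'_symm_none, ← hv, finSuccEquiv'_at]
    refine ⟨⟨e'.removeNone, v⟩, ?_⟩
    have key : ∀ k : Fin N, σ (Fin.castSucc k) = v.succAbove (e'.removeNone k) := by
      intro k
      have h1 : some (e'.removeNone k) = e' (some k) := by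
        apply Equiv.removeNone_some
        rcases h : e' (some k) with _ | x
        · exfalso
          have := e'.injective (h.trans hnone.symm)
          simp at this
        · exact ⟨x, rfl⟩
      have h2 : e' (some k) = finSuccEquiv' v (σ (Fin.castSucc k)) := by
        have : (finSuccEquiv' (Fin.last N)).symm (some k) = Fin.castSucc k := by
          rw [finSuccEquiv'_symm_some, Fin.succAbove_last]
        simp [he', Equiv.trans_apply, this]
      have h3 : some (e'.removeNone k) = finSuccEquiv' v (σ (Fin.castSucc k)) := h1.trans h2
      have h4 := congrArg (finSuccEquiv' v).symm h3
      rw [Equiv.symm_apply_apply, finSuccEquiv'_symm_some] at h4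
      exact h4.symm
    show ins v e'.removeNone = σ
    apply Equiv.ext; intro j
    refine Fin.lastCases ?_ ?_ j
    · rw [ins_last, hv]
    · intro k
      rw [ins_castSucc, key k]

lemma isRec_ins_castSucc {N : ℕ} (v : Fin (N+1)) (τ : Equiv.Perm (Fin N)) (k : Fin N) :
    IsRec (ins v τ) (Fin.castSucc k) ↔ IsRec τ k := by
  constructor
  · intro h l hl
    have := h (Fin.castSucc l) (Fin.castSucc_lt_castSucc_iff.mpr hl)
    rw [ins_castSucc, ins_castSucc, Fin.succAbove_lt_succAbove_iff] at this
    exact this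
  · intro h l hl
    have hl' : l < Fin.last N := lt_trans hl (Fin.castSucc_lt_last k)
    obtain ⟨l', rfl⟩ : ∃ l', Fin.castSucc l' = l := ⟨l.castPred (ne_of_lt hl'), by simp⟩
    rw [ins_castSucc, ins_castSucc, Fin.succAbove_lt_succAbove_iff]
    exact h l' (Fin.castSucc_lt_castSucc_iff.mp hl)

lemma isRec_ins_last {N : ℕ} (v : Fin (N+1)) (τ : Equiv.Perm (Fin N)) :
    IsRec (ins v τ) (Fin.last N) ↔ v = Fin.last N := by
  constructor
  · intro h
    by_contra hvne
    obtain ⟨j, hj⟩ := (ins v τ).surjective (Fin.last N)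
    have hjne : j ≠ Fin.last N := by
      intro hje
      rw [hje, ins_last] at hj
      exact hvne hj
    obtain ⟨k, rfl⟩ : ∃ k, Fin.castSucc k = j := ⟨j.castPred hjne, by simp⟩
    have hlt := h _ (Fin.castSucc_lt_last k)
    rw [hj, ins_last] at hlt
    exact absurd hlt (not_lt.mpr (Fin.le_last v))
  · rintro rfl
    intro l hl
    obtain ⟨k, rfl⟩ : ∃ k, Fin.castSucc k = l := ⟨l.castPred (ne_of_lt hl), by simp⟩
    rw [ins_castSucc, ins_last, Fin.succAbove_last]
    exact Fin.castSucc_lt_last _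

lemma sum_perm_rec (N : ℕ) : ∀ a b : Fin N → ℝ,
    (∑ σ : Equiv.Perm (Fin N), ∏ k : Fin N, (if IsRec σ k then a k else b k))
      = ∏ k : Fin N, (a k + (k : ℕ) * b k) := by
  induction N with
  | zero =>
    intro a b
    have h1 : ∀ σ : Equiv.Perm (Fin 0), (∏ k : Fin 0, if IsRec σ k then a k else b k) = 1 := by
      intro σ
      rw [Finset.univ_eq_empty, Finset.prod_empty]
    have h2 : (∏ k : Fin 0, (a k + (k:ℕ) * b k)) = 1 := by
      rw [Finset.univ_eq_empty, Finset.prod_empty]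
    rw [Finset.sum_congr rfl (fun σ _ => h1 σ), Finset.sum_const, Finset.card_univ,
      Fintype.card_perm, Fintype.card_fin, h2]
    norm_num
  | succ N ih =>
    intro a b
    rw [← Fintype.sum_bijective _ (ins_bijective (N := N))
      (fun p : Equiv.Perm (Fin N) × Fin (N+1) =>
        ∏ k : Fin (N+1), (if IsRec (ins p.2 p.1) k then a k else b k))
      (fun σ => ∏ k : Fin (N+1), (if IsRec σ k then a k else b k))
      (fun p => rfl)]
    rw [Fintype.sum_prod_type]
    have hsplit : ∀ (τ : Equiv.Perm (Fin N)) (v : Fin (N+1)),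
        (∏ k : Fin (N+1), (if IsRec (ins v τ) k then a k else b k))
        = (∏ k : Fin N, (if IsRec τ k then a (Fin.castSucc k) else b (Fin.castSucc k)))
          * (if v = Fin.last N then a (Fin.last N) else b (Fin.last N)) := by
      intro τ v
      rw [Fin.prod_univ_castSucc]
      congr 1
      · exact Finset.prod_congr rfl (fun k _ => by simp only [isRec_ins_castSucc])
      · simp only [isRec_ins_last]
    calc
      (∑ τ : Equiv.Perm (Fin N), ∑ v : Fin (N+1),
          ∏ k : Fin (N+1), (if IsRec (ins v τ) k then a k else b k))
        = ∑ τ : Equiv.Perm (Fin N),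
            (∏ k : Fin N, (if IsRec τ k then a (Fin.castSucc k) else b (Fin.castSucc k)))
            * (a (Fin.last N) + (N:ℝ) * b (Fin.last N)) := by
          apply Finset.sum_congr rfl
          intro τ _
          rw [Finset.sum_congr rfl (fun v _ => hsplit τ v), ← Finset.mul_sum]
          congr 1
          rw [← Finset.add_sum_erase _ _ (Finset.mem_univ (Fin.last N)), if_pos rfl]
          congr 1
          rw [Finset.sum_congr rfl
            (fun v hv => if_neg (Finset.mem_erase.mp hv).1), Finset.sum_const,
            Finset.card_erase_of_mem (Finset.mem_univ _), Finset.card_univ, Fintype.card_fin]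
          simp [nsmul_eq_mul]
      _ = (∏ k : Fin N, (a (Fin.castSucc k) + (k:ℕ) * b (Fin.castSucc k)))
            * (a (Fin.last N) + (N:ℝ) * b (Fin.last N)) := by
          rw [← Finset.sum_mul, ih]
      _ = ∏ k : Fin (N+1), (a k + (k : ℕ) * b k) := by
          rw [Fin.prod_univ_castSucc]
          simp [Fin.coe_castSucc, Fin.val_last]


/-! ### Undominated columns and certificates -/

/-- Columns of the column player that are not strictly dominated (ordinally). -/
def UndomF {m n : ℕ} (c : Fin m → Equiv.Perm (Fin n)) : Finset (Fin n) :=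
  Finset.univ.filter fun j => ¬ ∃ j', ∀ i, (c i) j < (c i) j'

/-- Certificate columns: undominated with respect to the base row 0 and some other row. -/
def GoodF {r n : ℕ} (c : Fin (r+1) → Equiv.Perm (Fin n)) : Finset (Fin n) :=
  Finset.univ.filter fun j =>
    ∃ i : Fin r, ∀ j', (c 0) j < (c 0) j' → (c i.succ) j' < (c i.succ) j

lemma GoodF_subset {r n : ℕ} (c : Fin (r+1) → Equiv.Perm (Fin n)) : GoodF c ⊆ UndomF c := by
  intro j hj
  rw [GoodF, Finset.mem_filter] at hj
  obtain ⟨-, i, hi⟩ := hj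
  rw [UndomF, Finset.mem_filter]
  refine ⟨Finset.mem_univ _, ?_⟩
  rintro ⟨j', hj'⟩
  exact absurd (hj' i.succ) (not_lt.mpr (le_of_lt (hi j' (hj' 0))))

/-- The key product `Φ(m,n)` with `m = r+1`. -/
noncomputable def Phi (r n : ℕ) : ℝ :=
  ∏ k ∈ Finset.range n, (((k:ℝ))^r + ((k:ℝ)+1)^r) / (2 * ((k:ℝ)+1)^r)

lemma Phi_nonneg (r n : ℕ) : 0 ≤ Phi r n := by
  apply Finset.prod_nonneg
  intro k _
  positivity

/-- evaluation of the inner sum over the `r` non-base rows -/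
lemma inner_count (r n : ℕ) :
    (∑ τ : Fin r → Equiv.Perm (Fin n),
      ((1:ℝ)/2) ^ (Finset.univ.filter (fun k : Fin n => ∃ i : Fin r, IsRec (τ i) k)).card)
      = ((1:ℝ)/2)^n * ∏ k : Fin n, (((k:ℕ):ℝ) ^ r + (((k:ℕ):ℝ) + 1) ^ r) := by
  have h1 : ∀ τ : Fin r → Equiv.Perm (Fin n),
      ((1:ℝ)/2) ^ (Finset.univ.filter (fun k : Fin n => ∃ i : Fin r, IsRec (τ i) k)).card
      = ∏ k : Fin n, ((1:ℝ)/2) * (1 + ∏ i : Fin r, (if IsRec (τ i) k then (0:ℝ) else 1)) := by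
    intro τ
    rw [eq_comm]
    calc (∏ k : Fin n, ((1:ℝ)/2) * (1 + ∏ i : Fin r, (if IsRec (τ i) k then (0:ℝ) else 1)))
        = ∏ k : Fin n,
            (if k ∈ Finset.univ.filter (fun k : Fin n => ∃ i : Fin r, IsRec (τ i) k)
              then ((1:ℝ)/2) else 1) := by
          apply Finset.prod_congr rfl
          intro k _
          by_cases h : ∃ i : Fin r, IsRec (τ i) k
          · obtain ⟨i0, hi0⟩ := h
            rw [if_pos (by simp only [Finset.mem_filter]; exact ⟨Finset.mem_univ _, i0, hi0⟩)]
            have hz : (∏ i : Fin r, if IsRec (τ i) k then (0:ℝ) else 1) = 0 :=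
              Finset.prod_eq_zero (Finset.mem_univ i0) (if_pos hi0)
            rw [hz]
            norm_num
          · rw [if_neg (by simp only [Finset.mem_filter]; tauto)]
            rw [Finset.prod_congr rfl (fun i _ => if_neg (fun hc => h ⟨i, hc⟩)),
              Finset.prod_const_one]
            norm_num
      _ = ((1:ℝ)/2) ^ (Finset.univ.filter (fun k : Fin n => ∃ i : Fin r, IsRec (τ i) k)).card := by
          rw [Finset.prod_ite_mem, Finset.univ_inter, Finset.prod_const]
  rw [Finset.sum_congr rfl (fun τ _ => h1 τ)]
  have h2 : ∀ τ : Fin r → Equiv.Perm (Fin n),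
      (∏ k : Fin n, ((1:ℝ)/2) * (1 + ∏ i : Fin r, (if IsRec (τ i) k then (0:ℝ) else 1)))
      = ((1:ℝ)/2)^n * ∏ k : Fin n, (1 + ∏ i : Fin r, (if IsRec (τ i) k then (0:ℝ) else 1)) := by
    intro τ
    rw [Finset.prod_mul_distrib, Finset.prod_const, Finset.card_univ, Fintype.card_fin]
  rw [Finset.sum_congr rfl (fun τ _ => h2 τ), ← Finset.mul_sum]
  congr 1
  -- expand the product over k
  have h3 : ∀ τ : Fin r → Equiv.Perm (Fin n),
      (∏ k : Fin n, (1 + ∏ i : Fin r, (if IsRec (τ i) k then (0:ℝ) else 1)))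
      = ∑ t ∈ (Finset.univ : Finset (Fin n)).powerset,
          ∏ k ∈ t, ∏ i : Fin r, (if IsRec (τ i) k then (0:ℝ) else 1) := by
    intro τ
    have := Finset.prod_add (fun k : Fin n => ∏ i : Fin r, (if IsRec (τ i) k then (0:ℝ) else 1))
      (fun _ : Fin n => (1:ℝ)) Finset.univ
    simp only [Finset.prod_const_one, mul_one] at this
    rw [← this]
    apply Finset.prod_congr rfl
    intro k _
    ring
  rw [Finset.sum_congr rfl (fun τ _ => h3 τ), Finset.sum_comm]
  -- inner sum for fixed t factorizes
  have h4 : ∀ t : Finset (Fin n),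
      (∑ τ : Fin r → Equiv.Perm (Fin n),
        ∏ k ∈ t, ∏ i : Fin r, (if IsRec (τ i) k then (0:ℝ) else 1))
      = (∑ σ : Equiv.Perm (Fin n), ∏ k ∈ t, (if IsRec σ k then (0:ℝ) else 1)) ^ r := by
    intro t
    have hcomm : ∀ τ : Fin r → Equiv.Perm (Fin n),
        (∏ k ∈ t, ∏ i : Fin r, (if IsRec (τ i) k then (0:ℝ) else 1))
        = ∏ i : Fin r, ∏ k ∈ t, (if IsRec (τ i) k then (0:ℝ) else 1) :=
      fun τ => Finset.prod_comm
    rw [Finset.sum_congr rfl (fun τ _ => hcomm τ)]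
    have hrhs : ((∑ σ : Equiv.Perm (Fin n), ∏ k ∈ t, (if IsRec σ k then (0:ℝ) else 1)) ^ r)
        = ∑ x ∈ Fintype.piFinset (fun _ : Fin r => (Finset.univ : Finset (Equiv.Perm (Fin n)))),
            ∏ i : Fin r, ∏ k ∈ t, (if IsRec ((x i)) k then (0:ℝ) else 1) := by
      rw [← Finset.prod_univ_sum (fun _ : Fin r => (Finset.univ : Finset (Equiv.Perm (Fin n))))
        (fun _ σ => ∏ k ∈ t, (if IsRec σ k then (0:ℝ) else 1))]
      rw [Finset.prod_const, Finset.card_univ, Fintype.card_fin]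
    rw [hrhs, Fintype.piFinset_univ]
  rw [Finset.sum_congr rfl (fun t _ => h4 t)]
  -- evaluate the single-permutation sum via records
  have h5 : ∀ t : Finset (Fin n),
      (∑ σ : Equiv.Perm (Fin n), ∏ k ∈ t, (if IsRec σ k then (0:ℝ) else 1))
      = ∏ k : Fin n, (if k ∈ t then ((k:ℕ):ℝ) else ((k:ℕ):ℝ)+1) := by
    intro t
    have hext : ∀ σ : Equiv.Perm (Fin n),
        (∏ k ∈ t, (if IsRec σ k then (0:ℝ) else 1))
        = ∏ k : Fin n, (if IsRec σ k then (if k ∈ t then (0:ℝ) else 1) else 1) := by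
      intro σ
      rw [eq_comm]
      calc (∏ k : Fin n, (if IsRec σ k then (if k ∈ t then (0:ℝ) else 1) else 1))
          = ∏ k : Fin n, (if k ∈ t then (if IsRec σ k then (0:ℝ) else 1) else 1) := by
            apply Finset.prod_congr rfl
            intro k _
            by_cases h1 : IsRec σ k <;> by_cases h2 : k ∈ t <;> simp [h1, h2]
        _ = ∏ k ∈ t, (if IsRec σ k then (0:ℝ) else 1) := by
            rw [Finset.prod_ite_mem, Finset.univ_inter]
    rw [Finset.sum_congr rfl (fun σ _ => hext σ), sum_perm_rec]
    apply Finset.prod_congr rfl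
    intro k _
    by_cases h : k ∈ t <;> simp [h, add_comm]
  rw [Finset.sum_congr rfl (fun t _ => by rw [h5 t])]
  -- recombine the sum over subsets into a product
  have h6 : ∀ t : Finset (Fin n),
      ((∏ k : Fin n, (if k ∈ t then ((k:ℕ):ℝ) else ((k:ℕ):ℝ)+1)) ^ r)
      = (∏ k ∈ t, (((k:ℕ):ℝ))^r) * ∏ k ∈ Finset.univ \ t, ((((k:ℕ):ℝ))+1)^r := by
    intro t
    rw [← Finset.prod_pow]
    rw [Finset.prod_congr rfl (fun k _ => apply_ite (· ^ r) (k ∈ t) ((k:ℕ):ℝ) (((k:ℕ):ℝ)+1))]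
    rw [Finset.prod_ite]
    congr 1
    · apply Finset.prod_congr _ (fun k _ => rfl)
      ext k
      simp
    · apply Finset.prod_congr _ (fun k _ => rfl)
      ext k
      simp
  rw [Finset.sum_congr rfl (fun t _ => h6 t)]
  rw [← Finset.prod_add]

/-- The master count. -/
lemma master_count (r n : ℕ) :
    (∑ c : Fin (r+1) → Equiv.Perm (Fin n), ((1:ℝ)/2) ^ (GoodF c).card)
      = ((Nat.factorial n : ℝ)) ^ (r+1) * Phi r n := by
  rw [← Equiv.sum_comp (Fin.consEquiv (fun _ : Fin (r+1) => Equiv.Perm (Fin n)))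
    (fun c => ((1:ℝ)/2) ^ (GoodF c).card)]
  rw [Fintype.sum_prod_type]
  have hcons : ∀ (x : Equiv.Perm (Fin n)) (y : Fin r → Equiv.Perm (Fin n)),
      (GoodF ((Fin.consEquiv fun _ => Equiv.Perm (Fin n)) (x, y))).card
        = (GoodF (Fin.cons x y : Fin (r+1) → Equiv.Perm (Fin n))).card := by
    intro x y; rfl
  simp only [hcons]
  have hinner : ∀ q0 : Equiv.Perm (Fin n),
      (∑ g : Fin r → Equiv.Perm (Fin n),
          ((1:ℝ)/2) ^ (GoodF (Fin.cons q0 g : Fin (r+1) → Equiv.Perm (Fin n))).card)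
      = ((1:ℝ)/2)^n * ∏ k : Fin n, (((k:ℕ):ℝ) ^ r + (((k:ℕ):ℝ) + 1) ^ r) := by
    intro q0
    set q : Equiv.Perm (Fin n) := q0.trans Fin.revPerm with hqdef
    rw [← Equiv.sum_comp (Equiv.piCongrRight (fun _ : Fin r => Equiv.mulRight q))
      (fun g : Fin r → Equiv.Perm (Fin n) =>
        ((1:ℝ)/2) ^ (GoodF (Fin.cons q0 g : Fin (r+1) → Equiv.Perm (Fin n))).card)]
    have hcard : ∀ τ : Fin r → Equiv.Perm (Fin n),
        (GoodF (Fin.cons q0 ((Equiv.piCongrRight (fun _ : Fin r => Equiv.mulRight q)) τ)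
            : Fin (r+1) → Equiv.Perm (Fin n))).card
        = (Finset.univ.filter (fun k : Fin n => ∃ i : Fin r, IsRec (τ i) k)).card := by
      intro τ
      have hlt : ∀ a b : Fin n, q0 a < q0 b ↔ q b < q a := by
        intro a b
        simp only [hqdef, Equiv.trans_apply, Fin.revPerm_apply]
        exact (Fin.rev_lt_rev).symm
      have hmem : ∀ j : Fin n,
          ((∃ i : Fin r, ∀ j', q0 j < q0 j' → (τ i * q) j' < (τ i * q) j)
            ↔ (∃ i : Fin r, IsRec (τ i) (q j))) := by
        intro j
        apply exists_congr
        intro i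
        constructor
        · intro h l hl
          have := h (q.symm l) (by rw [hlt]; simpa using hl)
          simpa using this
        · intro h j' hj'
          rw [hlt] at hj'
          simpa using h (q j') hj'
      apply Finset.card_bij (fun j _ => q j)
      · intro j hj
        rw [GoodF, Finset.mem_filter] at hj
        simp only [Fin.cons_zero, Fin.cons_succ, Equiv.piCongrRight_apply,
          Equiv.coe_mulRight] at hj
        rw [Finset.mem_filter]
        exact ⟨Finset.mem_univ _, (hmem j).mp hj.2⟩
      · intro a _ b _ hab
        exact q.injective hab
      · intro k hk
        rw [Finset.mem_filter] at hk
        refine ⟨q.symm k, ?_, by simp⟩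
        rw [GoodF, Finset.mem_filter]
        simp only [Fin.cons_zero, Fin.cons_succ, Equiv.piCongrRight_apply,
          Equiv.coe_mulRight]
        refine ⟨Finset.mem_univ _, (hmem (q.symm k)).mpr ?_⟩
        simpa using hk.2
    rw [Finset.sum_congr rfl (fun τ _ => by rw [hcard τ])]
    exact inner_count r n
  rw [Finset.sum_congr rfl (fun q0 _ => hinner q0), Finset.sum_const, Finset.card_univ,
    Fintype.card_perm, Fintype.card_fin, nsmul_eq_mul]
  -- algebraic identity
  have hfact : ((Nat.factorial n : ℝ)) = ∏ k ∈ Finset.range n, ((k:ℝ)+1) := by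
    rw [← Finset.prod_range_add_one_eq_factorial]
    push_cast
    rfl
  have hfin : (∏ k : Fin n, (((k:ℕ):ℝ) ^ r + (((k:ℕ):ℝ) + 1) ^ r))
      = ∏ k ∈ Finset.range n, (((k:ℝ)) ^ r + (((k:ℝ)) + 1) ^ r) := by
    exact Fin.prod_univ_eq_prod_range (fun k => ((k:ℝ))^r + ((k:ℝ)+1)^r) n
  rw [hfin]
  have hprod : (∏ k ∈ Finset.range n, (((k:ℝ))^r + ((k:ℝ)+1)^r))
      = (∏ k ∈ Finset.range n, ((2:ℝ) * ((k:ℝ)+1)^r)) * Phi r n := by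
    rw [Phi, ← Finset.prod_mul_distrib]
    apply Finset.prod_congr rfl
    intro k _
    have hne : (2:ℝ) * ((k:ℝ)+1)^r ≠ 0 := by positivity
    field_simp
  have h2T : (∏ k ∈ Finset.range n, ((2:ℝ) * ((k:ℝ)+1)^r))
      = 2^n * (Nat.factorial n:ℝ)^r := by
    rw [Finset.prod_mul_distrib, Finset.prod_const, Finset.card_range, hfact,
      ← Finset.prod_pow]
  rw [hprod, h2T, pow_succ, div_pow, one_pow]
  field_simp

/-! ### Probability of a fixed bad pair -/

def BadPair {m n : ℕ} (i i' : Fin m) : Set (Omega m n) :=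
  {ω | i ≠ i' ∧ ∀ j ∈ UndomF ω.2, (ω.1 j) i < (ω.1 j) i'}

lemma Pr_BadPair_le (r n : ℕ) (i i' : Fin (r+1)) (hii' : i ≠ i') :
    Pr (BadPair (m := r+1) (n := n) i i') ≤ Phi r n := by
  have hD : 2 * (Finset.univ.filter (fun σ : Equiv.Perm (Fin (r+1)) => σ i < σ i')).card
      = (r+1).factorial := by
    have hswap : (Finset.univ.filter (fun σ : Equiv.Perm (Fin (r+1)) => σ i < σ i')).card
        = (Finset.univ.filter (fun σ : Equiv.Perm (Fin (r+1)) => σ i' < σ i)).card := by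
      apply Finset.card_bij (fun σ _ => (Equiv.swap i i').trans σ)
      · intro σ hσ
        rw [Finset.mem_filter] at hσ ⊢
        refine ⟨Finset.mem_univ _, ?_⟩
        simpa [Equiv.trans_apply] using hσ.2
      · intro a ha b hb hab
        have := congrArg (fun σ => (Equiv.swap i i').trans σ) hab
        simpa [← Equiv.trans_assoc] using this
      · intro σ hσ
        refine ⟨(Equiv.swap i i').trans σ, ?_, ?_⟩
        · rw [Finset.mem_filter] at hσ ⊢
          refine ⟨Finset.mem_univ _, ?_⟩
          simpa [Equiv.trans_apply] using hσ.2
        · simp [← Equiv.trans_assoc]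
    have hneg : (Finset.univ.filter (fun σ : Equiv.Perm (Fin (r+1)) => ¬ σ i < σ i'))
        = Finset.univ.filter (fun σ : Equiv.Perm (Fin (r+1)) => σ i' < σ i) := by
      apply Finset.filter_congr
      intro σ _
      constructor
      · intro h
        rcases lt_or_eq_of_le (not_lt.mp h) with h1 | h1
        · exact h1
        · exact absurd (σ.injective h1) (Ne.symm hii')
      · intro h
        exact not_lt.mpr h.le
    have hsplit := Finset.card_filter_add_card_filter_not
      (s := (Finset.univ : Finset (Equiv.Perm (Fin (r+1))))) (p := fun σ => σ i < σ i')
    rw [hneg, ← hswap, Finset.card_univ, Fintype.card_perm, Fintype.card_fin] at hsplit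
    omega
  have hTF : (BadPair (m := r+1) (n := n) i i').toFinite.toFinset
      = Finset.univ.filter (fun ω : Omega (r+1) n =>
          ∀ j ∈ UndomF ω.2, (ω.1 j) i < (ω.1 j) i') := by
    ext ω
    simp only [Set.Finite.mem_toFinset, BadPair, Set.mem_setOf_eq, Finset.mem_filter,
      Finset.mem_univ, true_and]
    exact ⟨fun h => h.2, fun h => ⟨hii', h⟩⟩
  have key : ∀ c : Fin (r+1) → Equiv.Perm (Fin n),
      ((Finset.univ.filter (fun a : Fin n → Equiv.Perm (Fin (r+1)) =>
          ∀ j ∈ UndomF c, (a j) i < (a j) i')).card : ℝ)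
      = (((r+1).factorial : ℝ))^n * ((1:ℝ)/2) ^ (UndomF c).card := by
    intro c
    have hpi : (Finset.univ.filter (fun a : Fin n → Equiv.Perm (Fin (r+1)) =>
          ∀ j ∈ UndomF c, (a j) i < (a j) i'))
        = Fintype.piFinset (fun j => if j ∈ UndomF c
            then Finset.univ.filter (fun σ : Equiv.Perm (Fin (r+1)) => σ i < σ i')
            else Finset.univ) := by
      ext a
      simp only [Finset.mem_filter, Finset.mem_univ, true_and, Fintype.mem_piFinset]
      constructor
      · intro h j
        by_cases hj : j ∈ UndomF c
        · rw [if_pos hj]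
          exact Finset.mem_filter.mpr ⟨Finset.mem_univ _, h j hj⟩
        · rw [if_neg hj]
          exact Finset.mem_univ _
      · intro h j hj
        have := h j
        rw [if_pos hj, Finset.mem_filter] at this
        exact this.2
    rw [hpi, Fintype.card_piFinset]
    push_cast
    have hcongr : ∀ j : Fin n,
        (((if j ∈ UndomF c
            then Finset.univ.filter (fun σ : Equiv.Perm (Fin (r+1)) => σ i < σ i')
            else Finset.univ).card : ℝ))
        = (if j ∈ UndomF c
            then (((Finset.univ.filter (fun σ : Equiv.Perm (Fin (r+1)) => σ i < σ i')).card : ℕ) : ℝ)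
            else (((r+1).factorial : ℝ))) := by
      intro j
      by_cases hj : j ∈ UndomF c <;>
        simp [hj, Finset.card_univ, Fintype.card_perm, Fintype.card_fin]
    rw [Finset.prod_congr rfl (fun j _ => hcongr j)]
    rw [Finset.prod_ite
      (fun _ => (((Finset.univ.filter (fun σ : Equiv.Perm (Fin (r+1)) => σ i < σ i')).card : ℕ) : ℝ))
      (fun _ => (((r+1).factorial : ℝ)))]
    rw [Finset.prod_const, Finset.prod_const]
    have hf1 : (Finset.univ.filter (fun j : Fin n => j ∈ UndomF c)) = UndomF c := by
      ext j; simp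
    have hf2 : (Finset.univ.filter (fun j : Fin n => ¬ j ∈ UndomF c)).card
        = n - (UndomF c).card := by
      have he : (Finset.univ.filter (fun j : Fin n => ¬ j ∈ UndomF c))
          = Finset.univ \ UndomF c := by
        ext j; simp
      rw [he, Finset.card_sdiff_of_subset (Finset.subset_univ _), Finset.card_univ, Fintype.card_fin]
    rw [hf1, hf2]
    have hDreal : (((Finset.univ.filter
          (fun σ : Equiv.Perm (Fin (r+1)) => σ i < σ i')).card : ℕ) : ℝ)
        = (((r+1).factorial : ℝ))/2 := by
      have h := congrArg (fun x : ℕ => (x : ℝ)) hD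
      push_cast at h
      linarith
    rw [hDreal]
    have hun : (UndomF c).card ≤ n := by
      have := Finset.card_le_univ (UndomF c)
      simpa using this
    calc ((((r+1).factorial : ℝ))/2) ^ (UndomF c).card
          * (((r+1).factorial : ℝ)) ^ (n - (UndomF c).card)
        = ((((r+1).factorial : ℝ)) ^ (UndomF c).card
            * (((r+1).factorial : ℝ)) ^ (n - (UndomF c).card)) * ((1:ℝ)/2) ^ (UndomF c).card := by
          rw [div_pow, div_pow, one_pow]
          ring
      _ = (((r+1).factorial : ℝ))^n * ((1:ℝ)/2) ^ (UndomF c).card := by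
          rw [← pow_add, Nat.add_sub_cancel' hun]
  have hcount : ((BadPair (m := r+1) (n := n) i i').toFinite.toFinset.card : ℝ)
      = (((r+1).factorial : ℝ))^n *
          ∑ c : Fin (r+1) → Equiv.Perm (Fin n), ((1:ℝ)/2) ^ (UndomF c).card := by
    rw [hTF, Finset.card_filter]
    push_cast
    rw [Fintype.sum_prod_type]
    rw [Finset.sum_comm]
    rw [Finset.mul_sum]
    apply Finset.sum_congr rfl
    intro c _
    rw [Finset.sum_boole]
    exact key c
  have hOmega : (Fintype.card (Omega (r+1) n) : ℝ)
      = (((r+1).factorial : ℝ))^n * ((Nat.factorial n : ℝ))^(r+1) := by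
    have h1 : Fintype.card (Omega (r+1) n)
        = ((r+1).factorial)^n * ((Nat.factorial n))^(r+1) := by
      simp [Fintype.card_prod, Fintype.card_fun, Fintype.card_perm, Fintype.card_fin]
    rw [h1]
    push_cast
    ring
  have hmono : (∑ c : Fin (r+1) → Equiv.Perm (Fin n), ((1:ℝ)/2) ^ (UndomF c).card)
      ≤ ((Nat.factorial n : ℝ)) ^ (r+1) * Phi r n := by
    rw [← master_count]
    apply Finset.sum_le_sum
    intro c _
    apply pow_le_pow_of_le_one (by norm_num) (by norm_num)
    exact Finset.card_le_card (GoodF_subset c)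
  have hFpos : (0:ℝ) < (((r+1).factorial : ℝ))^n := by positivity
  have hQpos : (0:ℝ) < ((Nat.factorial n : ℝ))^(r+1) := by positivity
  rw [Pr, hcount, hOmega, mul_div_mul_left _ _ (ne_of_gt hFpos), div_le_iff₀ hQpos]
  calc (∑ c : Fin (r+1) → Equiv.Perm (Fin n), ((1:ℝ)/2) ^ (UndomF c).card)
      ≤ ((Nat.factorial n : ℝ)) ^ (r+1) * Phi r n := hmono
    _ = Phi r n * ((Nat.factorial n : ℝ)) ^ (r+1) := mul_comm _ _

/-! ### Reduction: if a row is ever eliminated, some pair is bad -/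

lemma reduction {m n : ℕ} (hm : 1 ≤ m) (hn : 1 ≤ n) (ω : Omega m n) (h : SR ω < m) :
    ∃ i i' : Fin m, i ≠ i' ∧ ∀ j ∈ UndomF ω.2, (ω.1 j) i < (ω.1 j) i' := by
  set R := RPay ω with hR
  set C := CPay ω with hC
  set st : ℕ → Finset (Fin m) × Finset (Fin n) :=
    fun t => (elimStep R C)^[t] (Finset.univ, Finset.univ) with hst
  have hSR : SR ω = (st (m+n)).1.card := rfl
  have hne : (st (m+n)).1 ≠ Finset.univ := by
    intro he
    rw [hSR, he, Finset.card_univ, Fintype.card_fin] at h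
    exact lt_irrefl _ h
  have hex : ∃ t, (st t).1 ≠ Finset.univ := ⟨m+n, hne⟩
  have hTspec := Nat.find_spec hex
  have hTmin : ∀ s, s < Nat.find hex → (st s).1 = Finset.univ := by
    intro s hs
    have := Nat.find_min hex hs
    tauto
  have hT0 : Nat.find hex ≠ 0 := by
    intro h0
    apply hTspec
    rw [h0]
    rfl
  obtain ⟨t, ht⟩ : ∃ t, Nat.find hex = t + 1 :=
    ⟨Nat.find hex - 1, (Nat.succ_pred_eq_of_pos (Nat.pos_of_ne_zero hT0)).symm⟩
  rw [ht] at hTspec hTmin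
  have hY : ∀ s, s ≤ t → ∀ j ∈ UndomF ω.2, j ∈ (st s).2 := by
    intro s
    induction s with
    | zero =>
      intro _ j _
      exact Finset.mem_univ j
    | succ s ih =>
      intro hs j hj
      have hXs : (st s).1 = Finset.univ := hTmin s (by omega)
      have hstep : st (s+1) = elimStep R C (st s) := by
        simp only [hst, Function.iterate_succ_apply']
      rw [hstep]
      show j ∈ (st s).2.filter _
      rw [Finset.mem_filter]
      refine ⟨ih (by omega) j hj, ?_⟩
      rintro ⟨j', hj'Y, hj'dom⟩
      rw [UndomF, Finset.mem_filter] at hj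
      apply hj.2
      refine ⟨j', fun i => ?_⟩
      have h2 := hj'dom i (by rw [hXs]; exact Finset.mem_univ i)
      rw [hC] at h2
      simp only [CPay] at h2
      exact_mod_cast h2
  have hXt : (st t).1 = Finset.univ := hTmin t (by omega)
  have hstep : st (t+1) = elimStep R C (st t) := by
    simp only [hst, Function.iterate_succ_apply']
  have hrow : ∃ i : Fin m, RowDomIn R (st t).1 (st t).2 i := by
    by_contra hno
    push_neg at hno
    apply hTspec
    rw [hstep]
    show ((st t).1.filter _) = Finset.univ
    rw [Finset.filter_true_of_mem, hXt]
    intro i _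
    exact hno i
  obtain ⟨i, i', hi'X, hlt⟩ := hrow
  obtain ⟨j₀, hj₀U⟩ : ∃ j₀, j₀ ∈ UndomF ω.2 := by
    haveI : Nonempty (Fin n) := Fin.pos_iff_nonempty.mp (by omega)
    obtain ⟨j₀, -, hmax⟩ := Finset.exists_max_image (Finset.univ : Finset (Fin n))
      (fun j => (ω.2 ⟨0, hm⟩) j) Finset.univ_nonempty
    refine ⟨j₀, ?_⟩
    rw [UndomF, Finset.mem_filter]
    refine ⟨Finset.mem_univ _, ?_⟩
    rintro ⟨j', hdom'⟩
    exact absurd (hdom' ⟨0, hm⟩) (not_lt.mpr (hmax j' (Finset.mem_univ _)))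
  refine ⟨i, i', ?_, ?_⟩
  · intro hii
    have := hlt j₀ (hY t le_rfl j₀ hj₀U)
    rw [hii] at this
    exact lt_irrefl _ this
  · intro j hj
    have h2 := hlt j (hY t le_rfl j hj)
    rw [hR] at h2
    simp only [RPay] at h2
    exact_mod_cast h2

/-! ### The case m = 1 -/

lemma SR_one {n : ℕ} (hn : 1 ≤ n) (ω : Omega 1 n) : SR ω = 1 := by
  haveI : Nonempty (Fin n) := Fin.pos_iff_nonempty.mp (by omega)
  set R := RPay ω with hR
  set C := CPay ω with hC
  have key : ∀ t, ((elimStep R C)^[t] (Finset.univ, Finset.univ)).1 = Finset.univ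
      ∧ ((elimStep R C)^[t] (Finset.univ, Finset.univ)).2.Nonempty := by
    intro t
    induction t with
    | zero => exact ⟨rfl, Finset.univ_nonempty⟩
    | succ t ih =>
      obtain ⟨hX, hY⟩ := ih
      rw [Function.iterate_succ_apply']
      constructor
      · show (Finset.filter _ _) = Finset.univ
        rw [hX]
        rw [Finset.filter_true_of_mem]
        intro i _
        rintro ⟨i', -, hlt⟩
        obtain ⟨j₀, hj₀⟩ := hY
        have hii' : i' = i := Subsingleton.elim _ _
        have := hlt j₀ hj₀
        rw [hii'] at this
        exact lt_irrefl _ this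
      · obtain ⟨j₀, hj₀Y, hmax⟩ := Finset.exists_max_image
          ((elimStep R C)^[t] (Finset.univ, Finset.univ)).2 (fun j => (ω.2 0) j) hY
        refine ⟨j₀, ?_⟩
        show j₀ ∈ (Finset.filter _ _)
        rw [Finset.mem_filter]
        refine ⟨hj₀Y, ?_⟩
        rintro ⟨j', hj'Y, hdom⟩
        have h2 := hdom 0 (by rw [hX]; exact Finset.mem_univ _)
        rw [hC] at h2
        simp only [CPay] at h2
        have h3 : (ω.2 0) j₀ < (ω.2 0) j' := by exact_mod_cast h2
        exact absurd h3 (not_lt.mpr (hmax j' hj'Y))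
  have hfin : ((elimStep R C)^[1+n] (Finset.univ, Finset.univ)).1 = Finset.univ := (key (1+n)).1
  show (survivors R C).1.card = 1
  rw [survivors, survivorsFrom]
  rw [hfin]
  simp

/-! ### Main bound -/

lemma main_bound (r n : ℕ) (hn : 1 ≤ n) :
    Pr {ω : Omega (r+1) n | SR ω < (r+1)} ≤ ((r:ℝ)+1) * (r:ℝ) * Phi r n := by
  have hsub : ∀ ω ∈ {ω : Omega (r+1) n | SR ω < (r+1)},
      ∃ p : Fin (r+1) × Fin (r+1), ω ∈ BadPair p.1 p.2 := by
    intro ω hω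
    obtain ⟨i, i', hne, hdom⟩ := reduction (by omega) hn ω hω
    exact ⟨(i, i'), hne, hdom⟩
  refine (Pr_le_sum _ _ hsub).trans ?_
  have h2 : ∀ p : Fin (r+1) × Fin (r+1),
      Pr (BadPair (n := n) p.1 p.2) ≤ (if p.1 = p.2 then 0 else Phi r n) := by
    intro p
    by_cases h : p.1 = p.2
    · rw [if_pos h]
      have he : BadPair (m := r+1) (n := n) p.1 p.2 = ∅ := by
        ext ω
        simp [BadPair, h]
      rw [Pr_eq_zero_of_empty he]
    · rw [if_neg h]
      exact Pr_BadPair_le r n p.1 p.2 h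
  refine (Finset.sum_le_sum (fun p _ => h2 p)).trans ?_
  rw [Fintype.sum_prod_type]
  have hrow : ∀ i : Fin (r+1),
      (∑ i' : Fin (r+1), (if i = i' then (0:ℝ) else Phi r n)) = (r:ℝ) * Phi r n := by
    intro i
    rw [← Finset.add_sum_erase _ _ (Finset.mem_univ i), if_pos rfl, zero_add]
    rw [Finset.sum_congr rfl (fun x hx => if_neg (fun he => (Finset.mem_erase.mp hx).1 he.symm))]
    rw [Finset.sum_const, Finset.card_erase_of_mem (Finset.mem_univ _), Finset.card_univ,
      Fintype.card_fin, nsmul_eq_mul]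
    push_cast
    ring
  rw [Finset.sum_congr rfl (fun i _ => hrow i), Finset.sum_const, Finset.card_univ,
    Fintype.card_fin, nsmul_eq_mul]
  push_cast
  ring_nf
  exact le_refl _

/-! ### Analytic estimates -/

lemma one_sub_pow_le {x : ℝ} (hx0 : 0 ≤ x) (hx1 : x ≤ 1) (r : ℕ) :
    (1 - x)^r ≤ 1 - (r:ℝ)*x + ((r:ℝ)*x)^2/2 := by
  induction r with
  | zero => simp
  | succ r ih =>
    have hpos : (0:ℝ) ≤ 1 - x := by linarith
    have key : (1-x)^(r+1) ≤ (1 - (r:ℝ)*x + ((r:ℝ)*x)^2/2) * (1-x) := by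
      rw [pow_succ]
      exact mul_le_mul_of_nonneg_right ih hpos
    refine key.trans ?_
    have hx3 : 0 ≤ (r:ℝ)^2 * x^3 := by positivity
    push_cast
    nlinarith [sq_nonneg x, hx3]

lemma factor_aux (r k : ℕ) :
    (((k:ℝ))^r + ((k:ℝ)+1)^r) / (2 * ((k:ℝ)+1)^r)
      = (1 + (1 - 1/((k:ℝ)+1))^r)/2 := by
  have h1x : (1 - 1/((k:ℝ)+1)) = (k:ℝ)/((k:ℝ)+1) := by field_simp; ring
  rw [h1x, div_pow]
  have hKr : ((k:ℝ)+1)^r ≠ 0 := by positivity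
  field_simp
  ring

lemma factor_le_exp1 (r k : ℕ) (hr : 1 ≤ r) (hk : r ≤ k + 1) :
    (((k:ℝ))^r + ((k:ℝ)+1)^r) / (2 * ((k:ℝ)+1)^r)
      ≤ Real.exp (-((r:ℝ)/(4*((k:ℝ)+1)))) := by
  set x : ℝ := 1/((k:ℝ)+1) with hx
  have hx0 : 0 < x := by positivity
  have hx1 : x ≤ 1 := by
    rw [hx, div_le_one (by positivity)]
    linarith [Nat.cast_nonneg (α := ℝ) k]
  have hrx : (r:ℝ)*x ≤ 1 := by
    rw [hx, mul_one_div, div_le_one (by positivity)]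
    exact_mod_cast hk
  rw [factor_aux]
  have hpow := one_sub_pow_le hx0.le hx1 r
  have hsq : ((r:ℝ)*x)^2 ≤ (r:ℝ)*x := by
    nlinarith [mul_nonneg (Nat.cast_nonneg (α := ℝ) r) hx0.le]
  have h2 : (1 + (1-x)^r)/2 ≤ 1 - (r:ℝ)*x/4 := by nlinarith [hpow, hsq]
  have h3 : 1 - (r:ℝ)*x/4 ≤ Real.exp (-((r:ℝ)*x/4)) := by
    linarith [Real.add_one_le_exp (-((r:ℝ)*x/4))]
  refine h2.trans (h3.trans (le_of_eq ?_))
  congr 1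
  rw [hx]
  field_simp

lemma factor_le_one (r k : ℕ) :
    (((k:ℝ))^r + ((k:ℝ)+1)^r) / (2 * ((k:ℝ)+1)^r) ≤ 1 := by
  rw [div_le_one (by positivity)]
  have : ((k:ℝ))^r ≤ ((k:ℝ)+1)^r := by
    apply pow_le_pow_left₀ (by positivity)
    linarith
  linarith

lemma factor_le_exp2 (r k : ℕ) :
    (((k:ℝ))^r + ((k:ℝ)+1)^r) / (2 * ((k:ℝ)+1)^r)
      ≤ Real.exp (-((r:ℝ)/(2*((k:ℝ)+1))) + (r:ℝ)^2 * (1/((k:ℝ)+1))^2/4) := by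
  set x : ℝ := 1/((k:ℝ)+1) with hx
  have hx0 : 0 < x := by positivity
  have hx1 : x ≤ 1 := by
    rw [hx, div_le_one (by positivity)]
    linarith [Nat.cast_nonneg (α := ℝ) k]
  rw [factor_aux]
  have hpow := one_sub_pow_le hx0.le hx1 r
  have h2 : (1 + (1-x)^r)/2 ≤ 1 + (-((r:ℝ)*x/2) + ((r:ℝ)*x)^2/4) := by nlinarith [hpow]
  have h3 : 1 + (-((r:ℝ)*x/2) + ((r:ℝ)*x)^2/4)
      ≤ Real.exp (-((r:ℝ)*x/2) + ((r:ℝ)*x)^2/4) := by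
    linarith [Real.add_one_le_exp (-((r:ℝ)*x/2) + ((r:ℝ)*x)^2/4)]
  refine h2.trans (h3.trans (le_of_eq ?_))
  congr 1
  rw [hx]
  field_simp

lemma harmonic_lower (a : ℕ) (ha : 1 ≤ a) (n : ℕ) :
    Real.log ((n:ℝ)+1) - Real.log (a:ℝ)
      ≤ ∑ k ∈ Finset.range n, (if a ≤ k+1 then 1/((k:ℝ)+1) else 0) := by
  induction n with
  | zero =>
    simp only [Finset.range_zero, Finset.sum_empty]
    have : (0:ℝ) ≤ Real.log (a:ℝ) := Real.log_nonneg (by exact_mod_cast ha)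
    simp only [Nat.cast_zero, zero_add, Real.log_one]
    linarith
  | succ n ih =>
    rw [Finset.sum_range_succ]
    by_cases h : a ≤ n+1
    · rw [if_pos h]
      have hlog : Real.log ((n:ℝ)+1+1) - Real.log ((n:ℝ)+1) ≤ 1/((n:ℝ)+1) := by
        rw [← Real.log_div (by positivity) (by positivity)]
        have hd := Real.log_le_sub_one_of_pos
          (show (0:ℝ) < ((n:ℝ)+1+1)/((n:ℝ)+1) by positivity)
        have he : ((n:ℝ)+1+1)/((n:ℝ)+1) - 1 = 1/((n:ℝ)+1) := by field_simp; ring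
        linarith
      push_cast
      push_cast at ih
      linarith
    · rw [if_neg h]
      have hle : (n:ℝ)+1+1 ≤ (a:ℝ) := by exact_mod_cast (by omega : n+2 ≤ a)
      have hlog : Real.log ((n:ℝ)+1+1) ≤ Real.log (a:ℝ) :=
        Real.log_le_log (by positivity) hle
      push_cast
      push_cast at ih
      have hS : (0:ℝ) ≤ ∑ k ∈ Finset.range n, (if a ≤ k+1 then 1/((k:ℝ)+1) else 0) := by
        apply Finset.sum_nonneg
        intro k _
        by_cases hk : a ≤ k+1 <;> simp [hk] <;> positivity
      linarith

lemma sq_sum_le (n : ℕ) : (∑ k ∈ Finset.range n, (1/((k:ℝ)+1))^2) ≤ 2 := by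
  have key : ∀ n : ℕ, (∑ k ∈ Finset.range n, (1/((k:ℝ)+1))^2) ≤ 2 - 2/((n:ℝ)+1) := by
    intro n
    induction n with
    | zero => simp
    | succ n ih =>
      rw [Finset.sum_range_succ]
      push_cast
      have h1 : (0:ℝ) < (n:ℝ)+1 := by positivity
      have h2 : (0:ℝ) < (n:ℝ)+2 := by positivity
      have hstep : (1/((n:ℝ)+1))^2 ≤ 2/((n:ℝ)+1) - 2/((n:ℝ)+1+1) := by
        rw [div_sub_div _ _ (ne_of_gt h1) (by positivity), div_pow, one_pow]
        rw [div_le_div_iff₀ (by positivity) (by positivity)]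
        nlinarith
      linarith
  have h := key n
  have : (0:ℝ) ≤ 2/((n:ℝ)+1) := by positivity
  linarith

lemma Phi_le_rpow (r n : ℕ) (hr : 1 ≤ r) (hn : r + 1 ≤ n) :
    Phi r n ≤ (((r:ℝ)+1) / (n:ℝ)) ^ ((r:ℝ)/4) := by
  have hn0 : (0:ℝ) < (n:ℝ) := by
    have : 0 < n := by omega
    exact_mod_cast this
  have hr0 : (0:ℝ) < (r:ℝ) := by exact_mod_cast hr
  have hchain : Phi r n ≤ Real.exp (∑ k ∈ Finset.range n,
      -(if r ≤ k+1 then (r:ℝ)/(4*((k:ℝ)+1)) else 0)) := by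
    rw [Real.exp_sum]
    apply Finset.prod_le_prod
    · intro k _
      positivity
    · intro k _
      by_cases h : r ≤ k+1
      · rw [if_pos h]
        exact factor_le_exp1 r k hr h
      · rw [if_neg h]
        simpa using factor_le_one r k
  refine hchain.trans ?_
  have hsum : (∑ k ∈ Finset.range n, -(if r ≤ k+1 then (r:ℝ)/(4*((k:ℝ)+1)) else 0))
      = -((r:ℝ)/4) * ∑ k ∈ Finset.range n, (if r ≤ k+1 then 1/((k:ℝ)+1) else 0) := by
    rw [Finset.mul_sum]
    apply Finset.sum_congr rfl
    intro k _
    by_cases h : r ≤ k+1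
    · rw [if_pos h, if_pos h]
      field_simp
    · rw [if_neg h, if_neg h]
      simp
  rw [hsum]
  have hharm := harmonic_lower r hr n
  rw [Real.rpow_def_of_pos (by positivity)]
  rw [Real.exp_le_exp]
  have h1 : Real.log (r:ℝ) ≤ Real.log ((r:ℝ)+1) := Real.log_le_log hr0 (by linarith)
  have h2 : Real.log (n:ℝ) ≤ Real.log ((n:ℝ)+1) := Real.log_le_log hn0 (by linarith)
  have hq : (0:ℝ) ≤ (r:ℝ)/4 := by positivity
  have hS : Real.log (n:ℝ) - Real.log ((r:ℝ)+1)
      ≤ ∑ k ∈ Finset.range n, (if r ≤ k+1 then 1/((k:ℝ)+1) else 0) := by linarith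
  have hmul := mul_le_mul_of_nonneg_left hS hq
  rw [Real.log_div (by positivity) (ne_of_gt hn0)]
  nlinarith [hmul]

lemma Phi_le_poly (r n : ℕ) (hn : 1 ≤ n) :
    Phi r n ≤ Real.exp ((r:ℝ)^2/2) * (n:ℝ) ^ (-((r:ℝ)/2)) := by
  have hn0 : (0:ℝ) < (n:ℝ) := by exact_mod_cast hn
  have hchain : Phi r n ≤ Real.exp (∑ k ∈ Finset.range n,
      (-((r:ℝ)/(2*((k:ℝ)+1))) + (r:ℝ)^2 * (1/((k:ℝ)+1))^2/4)) := by
    rw [Real.exp_sum]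
    apply Finset.prod_le_prod
    · intro k _
      positivity
    · intro k _
      exact factor_le_exp2 r k
  refine hchain.trans ?_
  rw [Finset.sum_add_distrib]
  have hA : (∑ k ∈ Finset.range n, -((r:ℝ)/(2*((k:ℝ)+1))))
      ≤ -((r:ℝ)/2) * Real.log ((n:ℝ)+1) := by
    have hh := harmonic_lower 1 le_rfl n
    have hsimp : (∑ k ∈ Finset.range n, (if 1 ≤ k+1 then 1/((k:ℝ)+1) else 0))
        = ∑ k ∈ Finset.range n, 1/((k:ℝ)+1) := by
      apply Finset.sum_congr rfl
      intro k _
      rw [if_pos (by omega)]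
    rw [hsimp] at hh
    simp only [Nat.cast_one, Real.log_one, sub_zero] at hh
    have heq : (∑ k ∈ Finset.range n, -((r:ℝ)/(2*((k:ℝ)+1))))
        = -((r:ℝ)/2) * ∑ k ∈ Finset.range n, 1/((k:ℝ)+1) := by
      rw [Finset.mul_sum]
      apply Finset.sum_congr rfl
      intro k _
      field_simp
    rw [heq]
    have hq : (0:ℝ) ≤ (r:ℝ)/2 := by positivity
    nlinarith [mul_le_mul_of_nonneg_left hh hq]
  have hB : (∑ k ∈ Finset.range n, (r:ℝ)^2 * (1/((k:ℝ)+1))^2/4) ≤ (r:ℝ)^2/2 := by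
    have heq : (∑ k ∈ Finset.range n, (r:ℝ)^2 * (1/((k:ℝ)+1))^2/4)
        = (r:ℝ)^2/4 * ∑ k ∈ Finset.range n, (1/((k:ℝ)+1))^2 := by
      rw [Finset.mul_sum]
      apply Finset.sum_congr rfl
      intro k _
      ring
    rw [heq]
    have hq : (0:ℝ) ≤ (r:ℝ)^2/4 := by positivity
    nlinarith [mul_le_mul_of_nonneg_left (sq_sum_le n) hq]
  have hlog : Real.log (n:ℝ) ≤ Real.log ((n:ℝ)+1) := Real.log_le_log hn0 (by linarith)
  have hstep : Real.exp ((∑ k ∈ Finset.range n, -((r:ℝ)/(2*((k:ℝ)+1))))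
        + ∑ k ∈ Finset.range n, (r:ℝ)^2 * (1/((k:ℝ)+1))^2/4)
      ≤ Real.exp (-((r:ℝ)/2) * Real.log (n:ℝ) + (r:ℝ)^2/2) := by
    rw [Real.exp_le_exp]
    have hq : (0:ℝ) ≤ (r:ℝ)/2 := by positivity
    nlinarith [hA, hB, mul_le_mul_of_nonneg_left hlog hq]
  refine hstep.trans (le_of_eq ?_)
  rw [Real.exp_add, Real.rpow_def_of_pos hn0]
  ring_nf

end Stmt18Aux

/-- For all `1 ≤ m ≤ n`, `Pr(S^R(m,n) < m) ≤ m(m−1)·(m/n)^((m−1)/4)`;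
moreover, for every fixed `m`, `Pr(S^R(m,n) < m) = O(n^(−(m−1)/2))` as `n → ∞`. -/
theorem stmt18 :
    (∀ m n : ℕ, 1 ≤ m → m ≤ n →
      Pr {ω : Omega m n | SR ω < m}
        ≤ (m : ℝ) * ((m : ℝ) - 1) * ((m : ℝ) / (n : ℝ)) ^ (((m : ℝ) - 1) / 4)) ∧
    ∀ m : ℕ, 1 ≤ m → ∃ C : ℝ, 0 < C ∧ ∀ n : ℕ, m ≤ n →
      Pr {ω : Omega m n | SR ω < m} ≤ C * (n : ℝ) ^ (-(((m : ℝ) - 1) / 2)) := by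
  constructor
  · intro m n hm hmn
    obtain ⟨r, rfl⟩ : ∃ r, m = r + 1 := ⟨m - 1, by omega⟩
    rcases Nat.eq_zero_or_pos r with hr | hr
    · subst hr
      have hE : {ω : Omega 1 n | SR ω < 1} = ∅ := by
        ext ω
        simp only [Set.mem_setOf_eq, Set.mem_empty_iff_false, iff_false, not_lt]
        rw [SR_one (by omega) ω]
      rw [hE, Pr_eq_zero_of_empty rfl]
      push_cast
      norm_num
    · have h1 := main_bound r n (by omega)
      have h2 := Phi_le_rpow r n hr (by omega)
      have hcast1 : ((r+1 : ℕ) : ℝ) = (r:ℝ)+1 := by push_cast; ring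
      rw [hcast1, show ((r:ℝ)+1-1) = (r:ℝ) from by ring]
      refine h1.trans ?_
      exact mul_le_mul_of_nonneg_left h2 (by positivity)
  · intro m hm
    obtain ⟨r, rfl⟩ : ∃ r, m = r + 1 := ⟨m - 1, by omega⟩
    rcases Nat.eq_zero_or_pos r with hr | hr
    · subst hr
      refine ⟨1, one_pos, ?_⟩
      intro n hn
      have hzz : (-(((((0+1 : ℕ)) : ℝ) - 1) / 2)) = 0 := by push_cast; ring
      rw [hzz, Real.rpow_zero, mul_one]
      exact Pr_le_one _
    · refine ⟨((r:ℝ)+1) * (r:ℝ) * Real.exp ((r:ℝ)^2/2), ?_, ?_⟩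
      · have hr0 : (0:ℝ) < (r:ℝ) := by exact_mod_cast hr
        positivity
      · intro n hn
        have h1 := main_bound r n (by omega)
        have h2 := Phi_le_poly r n (by omega)
        have hexp : (-((((r+1 : ℕ) : ℝ)) - 1) / 2) = -((r:ℝ)/2) := by push_cast; ring
        have hexp' : (-(((((r+1 : ℕ) : ℝ)) - 1) / 2)) = -((r:ℝ)/2) := by push_cast; ring
        rw [hexp']
        refine h1.trans ?_
        calc ((r:ℝ)+1) * (r:ℝ) * Phi r n
            ≤ ((r:ℝ)+1) * (r:ℝ) * (Real.exp ((r:ℝ)^2/2) * (n:ℝ) ^ (-((r:ℝ)/2))) := by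
              apply mul_le_mul_of_nonneg_left h2 (by positivity)
          _ = ((r:ℝ)+1) * (r:ℝ) * Real.exp ((r:ℝ)^2/2) * (n:ℝ) ^ (-((r:ℝ)/2)) := by ring
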